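/- For every n ≥ 2, the vector e₁ + eₙ is an extreme point of the closed unit ball of the Schreier space X_{S₁}. -/

import Mathlib

/-- The (0-indexed) Schreier family `S₁`: finite sets `F ⊆ ℕ` with `card F ≤ min F + 1`. -/
def SchreierAdm : Set (Finset ℕ) := {F | ∀ n ∈ F, F.card ≤ n + 1}

instance : Nonempty SchreierAdm := ⟨⟨∅, fun n hn => by simp at hn⟩⟩

lemma sum_abs_le_support (f : ℕ →₀ ℝ) (F : Finset ℕ) :
    ∑ k ∈ F, |f k| ≤ ∑ k ∈ f.support, |f k| := by
  calc ∑ k ∈ F, |f k| = ∑ k ∈ F ∩ f.support, |f k| := by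
        refine (Finset.sum_subset Finset.inter_subset_left fun x hx hx' => ?_).symm
        have : f x = 0 := by
          by_contra h
          exact hx' (Finset.mem_inter.2 ⟨hx, Finsupp.mem_support_iff.2 h⟩)
        simp [this]
    _ ≤ ∑ k ∈ f.support, |f k| :=
        Finset.sum_le_sum_of_subset_of_nonneg Finset.inter_subset_right
          fun _ _ _ => abs_nonneg _

/-- The Schreier norm `‖f‖ = sup_{F ∈ S₁} ∑_{k ∈ F} |f k|` on `c₀₀ = ℕ →₀ ℝ`. -/
noncomputable def schreierNorm (f : ℕ →₀ ℝ) : ℝ :=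
  ⨆ F : SchreierAdm, ∑ k ∈ F.1, |f k|

lemma schreierNorm_bdd (f : ℕ →₀ ℝ) :
    BddAbove (Set.range fun F : SchreierAdm => ∑ k ∈ F.1, |f k|) := by
  refine ⟨∑ k ∈ f.support, |f k|, ?_⟩
  rintro r ⟨F, rfl⟩
  exact sum_abs_le_support f F.1

/-- The Schreier norm as an `AddGroupNorm` on `c₀₀`. -/
noncomputable def schreierAGN : AddGroupNorm (ℕ →₀ ℝ) where
  toFun := schreierNorm
  map_zero' := by simp [schreierNorm]
  add_le' f g := by
    refine ciSup_le fun F => ?_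
    calc ∑ k ∈ F.1, |(f + g) k| ≤ ∑ k ∈ F.1, (|f k| + |g k|) :=
          Finset.sum_le_sum fun k _ => by simpa using abs_add_le (f k) (g k)
      _ = ∑ k ∈ F.1, |f k| + ∑ k ∈ F.1, |g k| := Finset.sum_add_distrib
      _ ≤ schreierNorm f + schreierNorm g :=
          add_le_add (le_ciSup (schreierNorm_bdd f) F) (le_ciSup (schreierNorm_bdd g) F)
  neg' f := by simp [schreierNorm]
  eq_zero_of_map_eq_zero' f hf := by
    ext n
    have hmem : ({n} : Finset ℕ) ∈ SchreierAdm := by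
      intro m hm
      simp only [Finset.card_singleton]
      omega
    have h1 : |f n| ≤ schreierNorm f := by
      unfold schreierNorm
      simpa using le_ciSup (schreierNorm_bdd f) (⟨{n}, hmem⟩ : SchreierAdm)
    have : |f n| = 0 := le_antisymm (hf ▸ h1) (abs_nonneg _)
    simpa using abs_eq_zero.mp this

/-- `c₀₀` equipped with the Schreier norm. -/
noncomputable instance : NormedAddCommGroup (ℕ →₀ ℝ) :=
  AddGroupNorm.toNormedAddCommGroup schreierAGN

noncomputable instance : NormedSpace ℝ (ℕ →₀ ℝ) := by
  refine ⟨fun c f => ?_⟩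
  have key : ∀ F : SchreierAdm, ∑ k ∈ F.1, |(c • f) k| = |c| * ∑ k ∈ F.1, |f k| := by
    intro F
    rw [Finset.mul_sum]
    exact Finset.sum_congr rfl fun k _ => by simp [abs_mul]
  show schreierNorm (c • f) ≤ ‖c‖ * schreierNorm f
  refine ciSup_le fun F => ?_
  rw [key F, Real.norm_eq_abs]
  exact mul_le_mul_of_nonneg_left (le_ciSup (schreierNorm_bdd f) F) (abs_nonneg c)

/-- The Schreier space `X_{S₁}`: the completion of `c₀₀` in the Schreier norm. -/
noncomputable abbrev SchreierSpace := UniformSpace.Completion (ℕ →₀ ℝ)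


section Aux

open UniformSpace

lemma norm_finsupp_def (f : ℕ →₀ ℝ) : ‖f‖ = schreierNorm f := rfl

lemma sum_abs_le_norm {F : Finset ℕ} (hF : F ∈ SchreierAdm) (f : ℕ →₀ ℝ) :
    ∑ k ∈ F, |f k| ≤ ‖f‖ :=
  le_ciSup (schreierNorm_bdd f) (⟨F, hF⟩ : SchreierAdm)

/-- The signed sum linear functional on `c₀₀`. -/
noncomputable def sgnSum (s : ℕ → ℝ) (F : Finset ℕ) : (ℕ →₀ ℝ) →ₗ[ℝ] ℝ where
  toFun f := ∑ k ∈ F, s k * f k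
  map_add' f g := by
    simp only [Finsupp.add_apply, mul_add]
    exact Finset.sum_add_distrib
  map_smul' c f := by
    simp only [Finsupp.smul_apply, smul_eq_mul, RingHom.id_apply, Finset.mul_sum]
    exact Finset.sum_congr rfl fun k _ => by ring

lemma sgnSum_bound {s : ℕ → ℝ} {F : Finset ℕ} (hF : F ∈ SchreierAdm)
    (hs : ∀ k, |s k| ≤ 1) (f : ℕ →₀ ℝ) : ‖sgnSum s F f‖ ≤ 1 * ‖f‖ := by
  rw [one_mul, Real.norm_eq_abs]
  calc |∑ k ∈ F, s k * f k| ≤ ∑ k ∈ F, |s k * f k| := Finset.abs_sum_le_sum_abs _ _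
    _ ≤ ∑ k ∈ F, |f k| := Finset.sum_le_sum fun k _ => by
        rw [abs_mul]
        exact mul_le_of_le_one_left (abs_nonneg _) (hs k)
    _ ≤ ‖f‖ := sum_abs_le_norm hF f

/-- The signed sum as a continuous linear functional on `c₀₀`. -/
noncomputable def sgnSumL (s : ℕ → ℝ) (F : Finset ℕ) (hF : F ∈ SchreierAdm)
    (hs : ∀ k, |s k| ≤ 1) : (ℕ →₀ ℝ) →L[ℝ] ℝ :=
  LinearMap.mkContinuous (sgnSum s F) 1 (sgnSum_bound hF hs)

lemma toComplL_norm_bound (f : ℕ →₀ ℝ) :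
    ‖f‖ ≤ ((1 : NNReal) : ℝ) * ‖(Completion.toComplL (𝕜 := ℝ) f : SchreierSpace)‖ := by
  have : (Completion.toComplL (𝕜 := ℝ) f : SchreierSpace) = (f : SchreierSpace) := by
    rw [Completion.coe_toComplL]
  rw [this, Completion.norm_coe]
  simp

lemma denseRange_toComplL :
    DenseRange (Completion.toComplL (𝕜 := ℝ) (E := ℕ →₀ ℝ)) := by
  rw [Completion.coe_toComplL]
  exact Completion.denseRange_coe

/-- The signed sum extended to the Schreier space. -/
noncomputable def sgnSumC (s : ℕ → ℝ) (F : Finset ℕ) (hF : F ∈ SchreierAdm)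
    (hs : ∀ k, |s k| ≤ 1) : SchreierSpace →L[ℝ] ℝ :=
  (sgnSumL s F hF hs).extend Completion.toComplL

lemma sgnSumC_coe (s : ℕ → ℝ) (F : Finset ℕ) (hF : F ∈ SchreierAdm)
    (hs : ∀ k, |s k| ≤ 1) (f : ℕ →₀ ℝ) :
    sgnSumC s F hF hs (f : SchreierSpace) = ∑ k ∈ F, s k * f k := by
  have hc : (f : SchreierSpace) = Completion.toComplL (𝕜 := ℝ) f := by
    rw [Completion.coe_toComplL]
  rw [hc]
  have := ContinuousLinearMap.extend_eq (f := sgnSumL s F hF hs) (e := Completion.toComplL)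
    denseRange_toComplL
    (ContinuousLinearMap.isUniformEmbedding_of_bound _ toComplL_norm_bound).isUniformInducing f
  exact this

lemma norm_sgnSumC_le (s : ℕ → ℝ) (F : Finset ℕ) (hF : F ∈ SchreierAdm)
    (hs : ∀ k, |s k| ≤ 1) : ‖sgnSumC s F hF hs‖ ≤ 1 := by
  have h := ContinuousLinearMap.opNorm_extend_le (f := sgnSumL s F hF hs)
    (e := Completion.toComplL) denseRange_toComplL (N := 1) toComplL_norm_bound
  have h2 : ‖sgnSumL s F hF hs‖ ≤ 1 :=
    LinearMap.mkContinuous_norm_le _ zero_le_one _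
  calc ‖sgnSumC s F hF hs‖ ≤ ((1:NNReal) : ℝ) * ‖sgnSumL s F hF hs‖ := h
    _ ≤ 1 := by simpa using h2

lemma abs_sgnSumC_le (s : ℕ → ℝ) (F : Finset ℕ) (hF : F ∈ SchreierAdm)
    (hs : ∀ k, |s k| ≤ 1) (y : SchreierSpace) :
    |sgnSumC s F hF hs y| ≤ ‖y‖ := by
  calc |sgnSumC s F hF hs y| ≤ ‖sgnSumC s F hF hs‖ * ‖y‖ :=
        (sgnSumC s F hF hs).le_opNorm y
    _ ≤ 1 * ‖y‖ := by
        exact mul_le_mul_of_nonneg_right (norm_sgnSumC_le s F hF hs) (norm_nonneg _)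
    _ = ‖y‖ := one_mul _

lemma singleton_adm (k : ℕ) : ({k} : Finset ℕ) ∈ SchreierAdm := by
  intro m hm
  simp only [Finset.mem_singleton] at hm
  simp [Finset.card_singleton]

lemma ones_bound : ∀ k : ℕ, |(fun _ : ℕ => (1:ℝ)) k| ≤ 1 := fun _ => by simp

/-- The `k`-th coordinate functional on the Schreier space. -/
noncomputable def coordC (k : ℕ) : SchreierSpace →L[ℝ] ℝ :=
  sgnSumC (fun _ => 1) {k} (singleton_adm k) ones_bound

lemma coordC_coe (k : ℕ) (f : ℕ →₀ ℝ) : coordC k (f : SchreierSpace) = f k := by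
  simp [coordC, sgnSumC_coe]

lemma abs_coordC_le (k : ℕ) (y : SchreierSpace) : |coordC k y| ≤ ‖y‖ :=
  abs_sgnSumC_le _ _ _ _ y

/-- A signed sum functional decomposes into coordinate functionals. -/
lemma sgnSumC_eq_sum_coordC (s : ℕ → ℝ) (F : Finset ℕ) (hF : F ∈ SchreierAdm)
    (hs : ∀ k, |s k| ≤ 1) (y : SchreierSpace) :
    sgnSumC s F hF hs y = ∑ k ∈ F, s k * coordC k y := by
  have h : (fun y : SchreierSpace => sgnSumC s F hF hs y)
      = fun y => ∑ k ∈ F, s k * coordC k y := by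
    refine Continuous.ext_on (Completion.denseRange_coe (α := ℕ →₀ ℝ)) ?_ ?_ ?_
    · exact (sgnSumC s F hF hs).continuous
    · exact continuous_finset_sum _ fun k _ =>
        ((coordC k).continuous.const_smul (s k) : Continuous fun y => s k * coordC k y)
    · rintro _ ⟨f, rfl⟩
      dsimp only
      rw [sgnSumC_coe]
      exact Finset.sum_congr rfl fun k _ => by rw [coordC_coe]
  exact congrFun h y

/-- An element of the Schreier space with the same coordinates as a finitely supported
vector equals it. -/
lemma eq_coe_of_coordC (y : SchreierSpace) (x : ℕ →₀ ℝ)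
    (h : ∀ k, coordC k y = x k) : y = (x : SchreierSpace) := by
  have key : ∀ ε : ℝ, 0 < ε → ‖y - (x : SchreierSpace)‖ ≤ 0 + 2 * ε := by
    intro ε hε
    obtain ⟨f, hf⟩ := Metric.denseRange_iff.1 Completion.denseRange_coe y ε hε
    have hfy : ‖(f : SchreierSpace) - y‖ ≤ ε := by
      rw [← dist_eq_norm, dist_comm]
      exact le_of_lt hf
    have hfx : ‖(f : SchreierSpace) - (x : SchreierSpace)‖ ≤ ε := by
      rw [← Completion.coe_sub, Completion.norm_coe, norm_finsupp_def]
      refine ciSup_le fun ⟨F, hF⟩ => ?_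
      set s : ℕ → ℝ := fun k => if 0 ≤ (f - x) k then 1 else -1 with hs_def
      have hs : ∀ k, |s k| ≤ 1 := by
        intro k
        rw [hs_def]
        dsimp only
        split <;> norm_num
      have habs : ∀ k, |(f - x) k| = s k * (f - x) k := by
        intro k
        rw [hs_def]
        dsimp only
        split
        · next hk => rw [abs_of_nonneg hk, one_mul]
        · next hk =>
            push_neg at hk
            rw [abs_of_neg hk]
            ring
      calc ∑ k ∈ F, |(f - x) k| = ∑ k ∈ F, s k * (f - x) k :=
            Finset.sum_congr rfl fun k _ => habs k
        _ = ∑ k ∈ F, s k * f k - ∑ k ∈ F, s k * x k := by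
            rw [← Finset.sum_sub_distrib]
            exact Finset.sum_congr rfl fun k _ => by
              simp [Finsupp.sub_apply, mul_sub]
        _ = sgnSumC s F hF hs (f : SchreierSpace) - sgnSumC s F hF hs y := by
            rw [sgnSumC_coe, sgnSumC_eq_sum_coordC s F hF hs y]
            congr 1
            exact (Finset.sum_congr rfl fun k _ => by rw [h k]).symm
        _ = sgnSumC s F hF hs ((f : SchreierSpace) - y) := (map_sub _ _ _).symm
        _ ≤ |sgnSumC s F hF hs ((f : SchreierSpace) - y)| := le_abs_self _
        _ ≤ ‖(f : SchreierSpace) - y‖ := abs_sgnSumC_le _ _ _ _ _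
        _ ≤ ε := hfy
    calc ‖y - (x : SchreierSpace)‖
        ≤ ‖y - (f : SchreierSpace)‖ + ‖(f : SchreierSpace) - (x : SchreierSpace)‖ :=
          norm_sub_le_norm_sub_add_norm_sub _ _ _
      _ ≤ ε + ε := add_le_add (by rw [← neg_sub, norm_neg]; exact hfy) hfx
      _ = 0 + 2 * ε := by ring
  have h0 : ‖y - (x : SchreierSpace)‖ ≤ 0 := by
    refine le_of_forall_pos_le_add fun ε hε => ?_
    have := key (ε / 2) (by linarith)
    linarith
  have := norm_le_zero_iff.1 h0
  exact sub_eq_zero.1 this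

lemma convex_combo_eq_one {a b u v : ℝ} (ha : 0 < a) (hb : 0 < b) (hab : a + b = 1)
    (hu : u ≤ 1) (hv : v ≤ 1) (h : a * u + b * v = 1) : u = 1 ∧ v = 1 :=
  ⟨by nlinarith, by nlinarith⟩

end Aux

/-- For every `n ≥ 1` (`n ≥ 2` in 1-indexed notation), `e₀ + eₙ` is an extreme point
of the closed unit ball of the Schreier space. -/
theorem schreier_extreme_point (n : ℕ) (hn : 1 ≤ n) :
    ((Finsupp.single 0 (1 : ℝ) + Finsupp.single n 1 : ℕ →₀ ℝ) : SchreierSpace) ∈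
      Set.extremePoints ℝ (Metric.closedBall (0 : SchreierSpace) 1) := by
  set x : ℕ →₀ ℝ := Finsupp.single 0 (1 : ℝ) + Finsupp.single n 1 with hx_def
  have hn0 : n ≠ 0 := by omega
  have hx0 : x 0 = 1 := by simp [hx_def, Finsupp.single_apply, hn0]
  have hxn : x n = 1 := by simp [hx_def, Finsupp.single_apply, Ne.symm hn0]
  have hxk : ∀ k, k ≠ 0 → k ≠ n → x k = 0 := by
    intro k h1 h2
    simp [hx_def, Finsupp.single_apply, Ne.symm h1, Ne.symm h2]
  -- the norm of x is at most 1
  have hxnorm : ‖x‖ ≤ 1 := by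
    rw [norm_finsupp_def]
    refine ciSup_le fun ⟨F, hF⟩ => ?_
    by_cases h0 : 0 ∈ F
    · have hcard : F.card ≤ 1 := by simpa using hF 0 h0
      have hFeq : F = {0} := by
        refine Finset.eq_singleton_iff_unique_mem.2 ⟨h0, fun m hm => ?_⟩
        by_contra hm0
        have : 2 ≤ F.card := Finset.one_lt_card.2 ⟨m, hm, 0, h0, hm0⟩
        omega
      simp [hFeq, hx0]
    · calc ∑ k ∈ F, |x k| ≤ ∑ k ∈ F, (if k = n then (1:ℝ) else 0) := by
            refine Finset.sum_le_sum fun k hk => ?_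
            by_cases hkn : k = n
            · simp [hkn, hxn]
            · have hk0 : k ≠ 0 := fun h => h0 (h ▸ hk)
              simp [hkn, hxk k hk0 hkn]
        _ ≤ 1 := by
            rw [Finset.sum_ite_eq' F n (fun _ => (1:ℝ))]
            by_cases hn' : n ∈ F <;> simp [hn']
  constructor
  · rw [Metric.mem_closedBall, dist_zero_right, UniformSpace.Completion.norm_coe]
    exact hxnorm
  intro y hy z hz hseg
  obtain ⟨a, b, ha, hb, hab, hxy⟩ := hseg
  rw [Metric.mem_closedBall, dist_zero_right] at hy hz
  -- coordinate values of y and z at 0 and n are 1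
  have hcoord_one : ∀ k, x k = 1 → coordC k y = 1 ∧ coordC k z = 1 := by
    intro k hk
    have h1 : a * coordC k y + b * coordC k z = 1 := by
      have := congrArg (coordC k) hxy
      rw [map_add, map_smul, map_smul, coordC_coe, hk] at this
      simpa using this
    exact convex_combo_eq_one ha hb hab
      (le_trans (le_abs_self _) (le_trans (abs_coordC_le k y) hy))
      (le_trans (le_abs_self _) (le_trans (abs_coordC_le k z) hz)) h1
  have h0y := hcoord_one 0 hx0
  have hny := hcoord_one n hxn
  -- other coordinates of y and z vanish
  have hvanish : ∀ w : SchreierSpace, ‖w‖ ≤ 1 → coordC n w = 1 →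
      ∀ k, k ≠ 0 → k ≠ n → coordC k w = 0 := by
    intro w hw hwn k hk0 hkn
    have hpair : ({n, k} : Finset ℕ) ∈ SchreierAdm := by
      intro m hm
      have hcard : ({n, k} : Finset ℕ).card ≤ 2 := by
        apply le_trans (Finset.card_insert_le _ _)
        simp
      simp only [Finset.mem_insert, Finset.mem_singleton] at hm
      rcases hm with rfl | rfl <;> omega
    have key : ∀ σ : ℝ, |σ| ≤ 1 → coordC n w + σ * coordC k w ≤ 1 := by
      intro σ hσ
      set s : ℕ → ℝ := fun j => if j = k then σ else 1 with hs_def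
      have hs : ∀ j, |s j| ≤ 1 := by
        intro j
        by_cases hj : j = k <;> simp [hs_def, hj, hσ]
      have hdecomp := sgnSumC_eq_sum_coordC s {n, k} hpair hs w
      have hsum : ∑ j ∈ ({n, k} : Finset ℕ), s j * coordC j w
          = coordC n w + σ * coordC k w := by
        rw [Finset.sum_insert (by simpa using Ne.symm hkn), Finset.sum_singleton, hs_def]
        dsimp only
        rw [if_neg (Ne.symm hkn), if_pos rfl, one_mul]
      have hb1 := le_trans (le_abs_self _) (le_trans (abs_sgnSumC_le s {n, k} hpair hs w) hw)
      rw [hdecomp, hsum] at hb1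
      exact hb1
    have h1 := key 1 (by norm_num)
    have h2 := key (-1) (by norm_num)
    rw [hwn] at h1 h2
    linarith
  -- conclude y = x and z = x
  have hy_eq : y = (x : SchreierSpace) := by
    refine eq_coe_of_coordC y x fun k => ?_
    by_cases hk0 : k = 0
    · rw [hk0, h0y.1, hx0]
    by_cases hkn : k = n
    · rw [hkn, hny.1, hxn]
    rw [hvanish y hy hny.1 k hk0 hkn, hxk k hk0 hkn]
  have hz_eq : z = (x : SchreierSpace) := by
    refine eq_coe_of_coordC z x fun k => ?_
    by_cases hk0 : k = 0
    · rw [hk0, h0y.2, hx0]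
    by_cases hkn : k = n
    · rw [hkn, hny.2, hxn]
    rw [hvanish z hz hny.2 k hk0 hkn, hxk k hk0 hkn]
  exact hy_eq
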